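/- For a subcritical Galton–Watson process with mean m ∈ (0,1), the sequence (1 − f_n(s))/(m^n (1 − s)) is monotone decreasing in n for each s ∈ [0,1), and converges as n → ∞ to a limit φ(s) ∈ [0,1], where φ is non-decreasing in s. -/
import Mathlib

open MeasureTheory Filter Topology

noncomputable def genFun (p : ℕ → ℝ) (s : ℝ) : ℝ := ∑' j, p j * s ^ j

noncomputable def genFunIter (p : ℕ → ℝ) : ℕ → ℝ → ℝ
  | 0, s => s
  | n + 1, s => genFun p (genFunIter p n s)

noncomputable def Gfun (p : ℕ → ℝ) (t : ℝ) : ℝ := ∑' j, p j * ∑ i ∈ Finset.range j, t ^ i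

section aux

variable {p : ℕ → ℝ} (hp_nonneg : ∀ j, 0 ≤ p j)

lemma S_nonneg {t : ℝ} (ht : 0 ≤ t) (j : ℕ) : 0 ≤ ∑ i ∈ Finset.range j, t ^ i :=
  Finset.sum_nonneg fun i _ => pow_nonneg ht i

lemma S_le {t : ℝ} (ht0 : 0 ≤ t) (ht1 : t ≤ 1) (j : ℕ) :
    ∑ i ∈ Finset.range j, t ^ i ≤ (j : ℝ) := by
  calc ∑ i ∈ Finset.range j, t ^ i ≤ ∑ _i ∈ Finset.range j, (1 : ℝ) :=
        Finset.sum_le_sum fun i _ => pow_le_one₀ ht0 ht1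
    _ = (j : ℝ) := by simp

include hp_nonneg

lemma summable_G (hm_summable : Summable fun j : ℕ => (j : ℝ) * p j)
    {t : ℝ} (ht0 : 0 ≤ t) (ht1 : t ≤ 1) :
    Summable (fun j => p j * ∑ i ∈ Finset.range j, t ^ i) := by
  refine Summable.of_nonneg_of_le (fun j => mul_nonneg (hp_nonneg j) (S_nonneg ht0 j))
    (fun j => ?_) hm_summable
  calc p j * ∑ i ∈ Finset.range j, t ^ i ≤ p j * (j : ℝ) :=
        mul_le_mul_of_nonneg_left (S_le ht0 ht1 j) (hp_nonneg j)
    _ = (j : ℝ) * p j := mul_comm _ _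

lemma summable_pow (hps : Summable p) {t : ℝ} (ht0 : 0 ≤ t) (ht1 : t ≤ 1) :
    Summable (fun j => p j * t ^ j) :=
  Summable.of_nonneg_of_le (fun j => mul_nonneg (hp_nonneg j) (pow_nonneg ht0 j))
    (fun j => by
      calc p j * t ^ j ≤ p j * 1 := mul_le_mul_of_nonneg_left (pow_le_one₀ ht0 ht1) (hp_nonneg j)
        _ = p j := mul_one _) hps

/-- key identity: 1 - f(t) = (1-t) * G(t) on [0,1] -/
lemma one_sub_genFun (hps : Summable p) (hp_sum : ∑' j, p j = 1)
    {t : ℝ} (ht0 : 0 ≤ t) (ht1 : t ≤ 1) :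
    1 - genFun p t = (1 - t) * Gfun p t := by
  have h1 : 1 - genFun p t = ∑' j, (p j - p j * t ^ j) := by
    rw [genFun, ← hp_sum, ← Summable.tsum_sub hps (summable_pow hp_nonneg hps ht0 ht1)]
  rw [h1, Gfun, ← tsum_mul_left]
  exact tsum_congr fun j => by linear_combination (p j) * geom_sum_mul t j

lemma G_mono (hm_summable : Summable fun j : ℕ => (j : ℝ) * p j) :
    MonotoneOn (Gfun p) (Set.Icc 0 1) := by
  intro a ha b hb hab
  refine Summable.tsum_le_tsum (fun j => ?_) (summable_G hp_nonneg hm_summable ha.1 ha.2)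
    (summable_G hp_nonneg hm_summable hb.1 hb.2)
  exact mul_le_mul_of_nonneg_left
    (Finset.sum_le_sum fun i _ => pow_le_pow_left₀ ha.1 hab i) (hp_nonneg j)

lemma G_le_m {m : ℝ} (hm : m = ∑' j : ℕ, (j : ℝ) * p j)
    (hm_summable : Summable fun j : ℕ => (j : ℝ) * p j)
    {t : ℝ} (ht0 : 0 ≤ t) (ht1 : t ≤ 1) : Gfun p t ≤ m := by
  rw [hm, Gfun]
  refine Summable.tsum_le_tsum (fun j => ?_) (summable_G hp_nonneg hm_summable ht0 ht1) hm_summable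
  calc p j * ∑ i ∈ Finset.range j, t ^ i ≤ p j * (j : ℝ) :=
        mul_le_mul_of_nonneg_left (S_le ht0 ht1 j) (hp_nonneg j)
    _ = (j : ℝ) * p j := mul_comm _ _

lemma G_pos {m : ℝ} (hm : m = ∑' j : ℕ, (j : ℝ) * p j)
    (hm_summable : Summable fun j : ℕ => (j : ℝ) * p j) (hm_pos : 0 < m)
    {t : ℝ} (ht0 : 0 ≤ t) (ht1 : t ≤ 1) : 0 < Gfun p t := by
  obtain ⟨j0, hj0⟩ : ∃ j : ℕ, 0 < (j : ℝ) * p j := by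
    by_contra h
    push_neg at h
    have : ∀ j : ℕ, (j : ℝ) * p j = 0 := fun j =>
      le_antisymm (h j) (mul_nonneg (Nat.cast_nonneg j) (hp_nonneg j))
    rw [hm] at hm_pos
    simp [this] at hm_pos
  have hj0ne : j0 ≠ 0 := by rintro rfl; simp at hj0
  have hpj0 : 0 < p j0 := by
    rcases (hp_nonneg j0).lt_or_eq with h | h
    · exact h
    · rw [← h] at hj0; simp at hj0
  have hS : 1 ≤ ∑ i ∈ Finset.range j0, t ^ i := by
    have := Finset.single_le_sum (f := fun i => t ^ i)
      (fun i _ => pow_nonneg ht0 i) (Finset.mem_range.mpr (Nat.pos_of_ne_zero hj0ne))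
    simpa using this
  have h2 : p j0 * 1 ≤ p j0 * ∑ i ∈ Finset.range j0, t ^ i :=
    mul_le_mul_of_nonneg_left hS hpj0.le
  have h3 : p j0 * ∑ i ∈ Finset.range j0, t ^ i ≤ Gfun p t :=
    Summable.le_tsum (summable_G hp_nonneg hm_summable ht0 ht1) j0
      (fun i _ => mul_nonneg (hp_nonneg i) (S_nonneg ht0 i))
  nlinarith

lemma genFun_nonneg {t : ℝ} (ht0 : 0 ≤ t) : 0 ≤ genFun p t :=
  tsum_nonneg fun j => mul_nonneg (hp_nonneg j) (pow_nonneg ht0 j)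

lemma genFun_mono (hps : Summable p) : MonotoneOn (genFun p) (Set.Icc 0 1) := by
  intro a ha b hb hab
  exact Summable.tsum_le_tsum
    (fun j => mul_le_mul_of_nonneg_left (pow_le_pow_left₀ ha.1 hab j) (hp_nonneg j))
    (summable_pow hp_nonneg hps ha.1 ha.2) (summable_pow hp_nonneg hps hb.1 hb.2)

lemma genFun_lt_one (hps : Summable p) (hp_sum : ∑' j, p j = 1)
    (hm_summable : Summable fun j : ℕ => (j : ℝ) * p j)
    {m : ℝ} (hm : m = ∑' j : ℕ, (j : ℝ) * p j) (hm_pos : 0 < m)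
    {t : ℝ} (ht0 : 0 ≤ t) (ht1 : t < 1) : genFun p t < 1 := by
  have h := one_sub_genFun hp_nonneg hps hp_sum ht0 ht1.le
  have hG := G_pos hp_nonneg hm hm_summable hm_pos ht0 ht1.le
  nlinarith

lemma iter_mem (hps : Summable p) (hp_sum : ∑' j, p j = 1)
    (hm_summable : Summable fun j : ℕ => (j : ℝ) * p j)
    {m : ℝ} (hm : m = ∑' j : ℕ, (j : ℝ) * p j) (hm_pos : 0 < m) (n : ℕ) :
    ∀ s ∈ Set.Ico (0 : ℝ) 1, genFunIter p n s ∈ Set.Ico (0 : ℝ) 1 := by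
  induction n with
  | zero => exact fun s hs => hs
  | succ n ih =>
    intro s hs
    obtain ⟨h0, h1⟩ := ih s hs
    exact ⟨genFun_nonneg hp_nonneg h0,
      genFun_lt_one hp_nonneg hps hp_sum hm_summable hm hm_pos h0 h1⟩

lemma iter_mono (hps : Summable p) (hp_sum : ∑' j, p j = 1)
    (hm_summable : Summable fun j : ℕ => (j : ℝ) * p j)
    {m : ℝ} (hm : m = ∑' j : ℕ, (j : ℝ) * p j) (hm_pos : 0 < m) (n : ℕ) :
    MonotoneOn (genFunIter p n) (Set.Ico 0 1) := by
  induction n with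
  | zero => exact fun a _ b _ hab => hab
  | succ n ih =>
    intro a ha b hb hab
    have hma := iter_mem hp_nonneg hps hp_sum hm_summable hm hm_pos n a ha
    have hmb := iter_mem hp_nonneg hps hp_sum hm_summable hm hm_pos n b hb
    exact genFun_mono hp_nonneg hps ⟨hma.1, hma.2.le⟩ ⟨hmb.1, hmb.2.le⟩ (ih ha hb hab)

end aux

/-- for a subcritical GW-process with mean `m ∈ (0,1)` (and `p₀ < 1`),
for each `s ∈ [0,1)` the sequence `(1 - f_n(s))/(m^n (1-s))` is monotone decreasing
in `n` and converges to a limit `φ(s) ∈ [0,1]`, and `φ` is non-decreasing on `[0,1)`. -/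
theorem stmt4 (p : ℕ → ℝ) (m : ℝ)
    (hp_nonneg : ∀ j, 0 ≤ p j) (hp_sum : ∑' j, p j = 1) (hp0 : p 0 < 1)
    (hm : m = ∑' j : ℕ, (j : ℝ) * p j)
    (hm_summable : Summable fun j : ℕ => (j : ℝ) * p j)
    (hm_pos : 0 < m) (hm_lt : m < 1) :
    ∃ φ : ℝ → ℝ, MonotoneOn φ (Set.Ico 0 1) ∧
      ∀ s ∈ Set.Ico (0 : ℝ) 1,
        (Antitone fun n : ℕ => (1 - genFunIter p n s) / (m ^ n * (1 - s))) ∧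
        Tendsto (fun n : ℕ => (1 - genFunIter p n s) / (m ^ n * (1 - s)))
          atTop (𝓝 (φ s)) ∧ φ s ∈ Set.Icc (0 : ℝ) 1 := by
  have hps : Summable p := by
    by_contra h
    rw [tsum_eq_zero_of_not_summable h] at hp_sum
    norm_num at hp_sum
  set a : ℕ → ℝ → ℝ := fun n s => (1 - genFunIter p n s) / (m ^ n * (1 - s)) with ha
  have hmem := iter_mem hp_nonneg hps hp_sum hm_summable hm hm_pos
  -- key recursion
  have key : ∀ n : ℕ, ∀ s ∈ Set.Ico (0 : ℝ) 1,
      1 - genFunIter p (n + 1) s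
        = (1 - genFunIter p n s) * Gfun p (genFunIter p n s) := by
    intro n s hs
    obtain ⟨h0, h1⟩ := hmem n s hs
    have h := one_sub_genFun hp_nonneg hps hp_sum h0 h1.le
    show 1 - genFun p (genFunIter p n s) = _
    rw [h]
  have hanonneg : ∀ n : ℕ, ∀ s ∈ Set.Ico (0 : ℝ) 1, 0 ≤ a n s := by
    intro n s hs
    obtain ⟨h0, h1⟩ := hmem n s hs
    have hden : 0 < m ^ n * (1 - s) := by
      have := hs.2
      have h2 : (0:ℝ) < 1 - s := by linarith
      positivity
    exact div_nonneg (by linarith) hden.le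
  have ha0 : ∀ s ∈ Set.Ico (0 : ℝ) 1, a 0 s = 1 := by
    intro s hs
    have hne : (1 : ℝ) - s ≠ 0 := by have := hs.2; intro h; linarith
    show (1 - genFunIter p 0 s) / (m ^ 0 * (1 - s)) = 1
    show (1 - s) / (m ^ 0 * (1 - s)) = 1
    rw [pow_zero, one_mul, div_self hne]
  have hanti : ∀ s ∈ Set.Ico (0 : ℝ) 1, Antitone fun n => a n s := by
    intro s hs
    refine antitone_nat_of_succ_le fun n => ?_
    obtain ⟨h0, h1⟩ := hmem n s hs
    have hGm : Gfun p (genFunIter p n s) ≤ m := G_le_m hp_nonneg hm hm_summable h0 h1.le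
    have hA : (0:ℝ) ≤ 1 - genFunIter p n s := by linarith
    have hs1 : (0:ℝ) < 1 - s := by have := hs.2; linarith
    show (1 - genFunIter p (n+1) s) / (m ^ (n+1) * (1 - s))
        ≤ (1 - genFunIter p n s) / (m ^ n * (1 - s))
    rw [div_le_div_iff₀ (by positivity) (by positivity), key n s hs, pow_succ]
    nlinarith [mul_le_mul_of_nonneg_right (mul_le_mul_of_nonneg_left hGm hA)
      (le_of_lt (mul_pos (pow_pos hm_pos n) hs1)), pow_pos hm_pos n]
  -- monotonicity in s for fixed n
  have hamono : ∀ n : ℕ, MonotoneOn (fun s => a n s) (Set.Ico 0 1) := by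
    have hh : ∀ n : ℕ, MonotoneOn (fun s => (1 - genFunIter p n s) / (1 - s)) (Set.Ico 0 1)
        ∧ ∀ s ∈ Set.Ico (0:ℝ) 1, 0 ≤ (1 - genFunIter p n s) / (1 - s) := by
      intro n
      induction n with
      | zero =>
        constructor
        · intro x hx y hy hxy
          have hx1 : (1:ℝ) - x ≠ 0 := by have := hx.2; intro h; linarith
          have hy1 : (1:ℝ) - y ≠ 0 := by have := hy.2; intro h; linarith
          show (1 - genFunIter p 0 x) / (1 - x) ≤ (1 - genFunIter p 0 y) / (1 - y)
          show (1 - x) / (1 - x) ≤ (1 - y) / (1 - y)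
          rw [div_self hx1, div_self hy1]
        · intro s hs
          have h1 : (0:ℝ) < 1 - s := by have := hs.2; linarith
          show 0 ≤ (1 - s) / (1 - s)
          positivity
      | succ n ih =>
        have hrw : ∀ s ∈ Set.Ico (0:ℝ) 1,
            (1 - genFunIter p (n+1) s) / (1 - s)
              = Gfun p (genFunIter p n s) * ((1 - genFunIter p n s) / (1 - s)) := by
          intro s hs
          rw [key n s hs]; ring
        constructor
        · intro x hx y hy hxy
          have hGx0 := hmem n x hx
          have hGy0 := hmem n y hy
          have hG0 : 0 ≤ Gfun p (genFunIter p n y) :=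
            tsum_nonneg fun j => mul_nonneg (hp_nonneg j) (S_nonneg hGy0.1 j)
          have hGmono : Gfun p (genFunIter p n x) ≤ Gfun p (genFunIter p n y) :=
            G_mono hp_nonneg hm_summable ⟨hGx0.1, hGx0.2.le⟩ ⟨hGy0.1, hGy0.2.le⟩
              (iter_mono hp_nonneg hps hp_sum hm_summable hm hm_pos n hx hy hxy)
          simp only [hrw x hx, hrw y hy]
          exact mul_le_mul hGmono (ih.1 hx hy hxy) (ih.2 x hx) hG0
        · intro s hs
          rw [hrw s hs]
          have hGs := hmem n s hs
          exact mul_nonneg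
            (tsum_nonneg fun j => mul_nonneg (hp_nonneg j) (S_nonneg hGs.1 j))
            (ih.2 s hs)
    intro n x hx y hy hxy
    have harw : ∀ s ∈ Set.Ico (0:ℝ) 1,
        a n s = ((1 - genFunIter p n s) / (1 - s)) / m ^ n := by
      intro s hs
      show (1 - genFunIter p n s) / (m ^ n * (1 - s)) = _
      rw [div_div, mul_comm]
    simp only [harw x hx, harw y hy]
    exact div_le_div_of_nonneg_right ((hh n).1 hx hy hxy) (pow_pos hm_pos n).le
  refine ⟨fun s => ⨅ n, a n s, ?_, ?_⟩
  · intro x hx y hy hxy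
    exact ciInf_mono ⟨0, by rintro _ ⟨n, rfl⟩; exact hanonneg n x hx⟩
      fun n => hamono n hx hy hxy
  · intro s hs
    have hbdd : BddBelow (Set.range fun n => a n s) :=
      ⟨0, by rintro _ ⟨n, rfl⟩; exact hanonneg n s hs⟩
    refine ⟨hanti s hs, tendsto_atTop_ciInf (hanti s hs) hbdd, ?_, ?_⟩
    · exact le_ciInf fun n => hanonneg n s hs
    · calc ⨅ n, a n s ≤ a 0 s := ciInf_le hbdd 0
        _ = 1 := ha0 s hs
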